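/- arXiv:2401.11774 — 2 statements merged into one kernel-verified Lean document; each statement's English description precedes it below -/
import Mathlib

section
/- Assume the sign conditions hold, the kernel condition holds, and that the pair (Q − L R⁻¹ Lᵀ, A) is detectable. Then for every symmetric X̃ ∈ ℝ^{n×n} with X̃ ⪰ 0, the pair (H_c(X̃), A_c(X̃)) is detectable — i.e., for every λ ∈ ℂ with Re λ ≥ 0 and every z ∈ ℂⁿ with (A_c(X̃) − λIₙ)z = 0 and H_c(X̃)z = 0 one has z = 0 — and moreover H_c(X̃) ⪰ 0. -/
open Matrix Filter

noncomputable section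

/-- `Π₁₁(X) = Σᵢ (A₀ⁱ)ᵀ X A₀ⁱ`. -/
def Pi11 {n r : ℕ} (A0 : Fin r → Matrix (Fin n) (Fin n) ℝ)
    (X : Matrix (Fin n) (Fin n) ℝ) : Matrix (Fin n) (Fin n) ℝ :=
  ∑ i, (A0 i)ᵀ * X * A0 i

/-- `Π₁₂(X) = Σᵢ (A₀ⁱ)ᵀ X B₀ⁱ`. -/
def Pi12 {n m r : ℕ} (A0 : Fin r → Matrix (Fin n) (Fin n) ℝ)
    (B0 : Fin r → Matrix (Fin n) (Fin m) ℝ)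
    (X : Matrix (Fin n) (Fin n) ℝ) : Matrix (Fin n) (Fin m) ℝ :=
  ∑ i, (A0 i)ᵀ * X * B0 i

/-- `Π₂₂(X) = Σᵢ (B₀ⁱ)ᵀ X B₀ⁱ`. -/
def Pi22 {n m r : ℕ} (B0 : Fin r → Matrix (Fin n) (Fin m) ℝ)
    (X : Matrix (Fin n) (Fin n) ℝ) : Matrix (Fin m) (Fin m) ℝ :=
  ∑ i, (B0 i)ᵀ * X * B0 i

/-- The block matrix `Π(X) = [Π₁₁(X), Π₁₂(X); Π₁₂(X)ᵀ, Π₂₂(X)]`. -/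
def PiBlock {n m r : ℕ} (A0 : Fin r → Matrix (Fin n) (Fin n) ℝ)
    (B0 : Fin r → Matrix (Fin n) (Fin m) ℝ)
    (X : Matrix (Fin n) (Fin n) ℝ) : Matrix (Fin n ⊕ Fin m) (Fin n ⊕ Fin m) ℝ :=
  fromBlocks (Pi11 A0 X) (Pi12 A0 B0 X) (Pi12 A0 B0 X)ᵀ (Pi22 B0 X)

/-- `L_c(X) = L + Π₁₂(X)`. -/
def Lc {n m r : ℕ} (L : Matrix (Fin n) (Fin m) ℝ)
    (A0 : Fin r → Matrix (Fin n) (Fin n) ℝ) (B0 : Fin r → Matrix (Fin n) (Fin m) ℝ)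
    (X : Matrix (Fin n) (Fin n) ℝ) : Matrix (Fin n) (Fin m) ℝ :=
  L + Pi12 A0 B0 X

/-- `R_c(X) = R + Π₂₂(X)`. -/
def Rc {n m r : ℕ} (R : Matrix (Fin m) (Fin m) ℝ)
    (B0 : Fin r → Matrix (Fin n) (Fin m) ℝ)
    (X : Matrix (Fin n) (Fin n) ℝ) : Matrix (Fin m) (Fin m) ℝ :=
  R + Pi22 B0 X

/-- `Q_c(X) = Q + Π₁₁(X)`. -/
def Qc {n r : ℕ} (Q : Matrix (Fin n) (Fin n) ℝ)
    (A0 : Fin r → Matrix (Fin n) (Fin n) ℝ)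
    (X : Matrix (Fin n) (Fin n) ℝ) : Matrix (Fin n) (Fin n) ℝ :=
  Q + Pi11 A0 X

/-- `A_c(X) = A − B R_c(X)⁻¹ L_c(X)ᵀ`. -/
def Ac {n m r : ℕ} (A : Matrix (Fin n) (Fin n) ℝ) (B : Matrix (Fin n) (Fin m) ℝ)
    (L : Matrix (Fin n) (Fin m) ℝ) (R : Matrix (Fin m) (Fin m) ℝ)
    (A0 : Fin r → Matrix (Fin n) (Fin n) ℝ) (B0 : Fin r → Matrix (Fin n) (Fin m) ℝ)
    (X : Matrix (Fin n) (Fin n) ℝ) : Matrix (Fin n) (Fin n) ℝ :=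
  A - B * (Rc R B0 X)⁻¹ * (Lc L A0 B0 X)ᵀ

/-- `G_c(X) = B R_c(X)⁻¹ Bᵀ`. -/
def Gc {n m r : ℕ} (B : Matrix (Fin n) (Fin m) ℝ) (R : Matrix (Fin m) (Fin m) ℝ)
    (B0 : Fin r → Matrix (Fin n) (Fin m) ℝ)
    (X : Matrix (Fin n) (Fin n) ℝ) : Matrix (Fin n) (Fin n) ℝ :=
  B * (Rc R B0 X)⁻¹ * Bᵀ

/-- `H_c(X) = Q_c(X) − L_c(X) R_c(X)⁻¹ L_c(X)ᵀ`. -/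
def Hc {n m r : ℕ} (Q : Matrix (Fin n) (Fin n) ℝ) (L : Matrix (Fin n) (Fin m) ℝ)
    (R : Matrix (Fin m) (Fin m) ℝ)
    (A0 : Fin r → Matrix (Fin n) (Fin n) ℝ) (B0 : Fin r → Matrix (Fin n) (Fin m) ℝ)
    (X : Matrix (Fin n) (Fin n) ℝ) : Matrix (Fin n) (Fin n) ℝ :=
  Qc Q A0 X - Lc L A0 B0 X * (Rc R B0 X)⁻¹ * (Lc L A0 B0 X)ᵀ

/-- The SCARE residual
`𝓡(X) = AᵀX + XA + Q_c(X) − (XB + L_c(X)) R_c(X)⁻¹ (XB + L_c(X))ᵀ`. -/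
def scareRes {n m r : ℕ} (A : Matrix (Fin n) (Fin n) ℝ) (B : Matrix (Fin n) (Fin m) ℝ)
    (Q : Matrix (Fin n) (Fin n) ℝ) (L : Matrix (Fin n) (Fin m) ℝ)
    (R : Matrix (Fin m) (Fin m) ℝ)
    (A0 : Fin r → Matrix (Fin n) (Fin n) ℝ) (B0 : Fin r → Matrix (Fin n) (Fin m) ℝ)
    (X : Matrix (Fin n) (Fin n) ℝ) : Matrix (Fin n) (Fin n) ℝ :=
  Aᵀ * X + X * A + Qc Q A0 X -
    (X * B + Lc L A0 B0 X) * (Rc R B0 X)⁻¹ * (X * B + Lc L A0 B0 X)ᵀ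

/-- `Ω(X) = [−G_c(X), −A_c(X); −A_c(X)ᵀ, H_c(X)]`. -/
def Omega {n m r : ℕ} (A : Matrix (Fin n) (Fin n) ℝ) (B : Matrix (Fin n) (Fin m) ℝ)
    (Q : Matrix (Fin n) (Fin n) ℝ) (L : Matrix (Fin n) (Fin m) ℝ)
    (R : Matrix (Fin m) (Fin m) ℝ)
    (A0 : Fin r → Matrix (Fin n) (Fin n) ℝ) (B0 : Fin r → Matrix (Fin n) (Fin m) ℝ)
    (X : Matrix (Fin n) (Fin n) ℝ) : Matrix (Fin n ⊕ Fin n) (Fin n ⊕ Fin n) ℝ :=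
  fromBlocks (-(Gc B R B0 X)) (-(Ac A B L R A0 B0 X)) (-(Ac A B L R A0 B0 X))ᵀ
    (Hc Q L R A0 B0 X)

/-- The `2n×n` matrix `[X; −Iₙ]` stacking `X` over `−Iₙ`. -/
def stackNegI {n : ℕ} (X : Matrix (Fin n) (Fin n) ℝ) :
    Matrix (Fin n ⊕ Fin n) (Fin n) ℝ :=
  fromRows X (-1)

/-- The pair `(A, B)` is stabilizable: `yᴴ(A − λI) = 0`, `yᴴB = 0`, `Re λ ≥ 0` imply `y = 0`. -/
def Stabilizable {n m : ℕ} (A : Matrix (Fin n) (Fin n) ℝ)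
    (B : Matrix (Fin n) (Fin m) ℝ) : Prop :=
  ∀ (lam : ℂ) (y : Fin n → ℂ), 0 ≤ lam.re →
    vecMul (star y) (A.map Complex.ofReal - lam • 1) = 0 →
    vecMul (star y) (B.map Complex.ofReal) = 0 → y = 0

/-- The pair `(C, A)` is detectable: `(A − λI)z = 0`, `Cz = 0`, `Re λ ≥ 0` imply `z = 0`. -/
def Detectable {p n : ℕ} (C : Matrix (Fin p) (Fin n) ℝ)
    (A : Matrix (Fin n) (Fin n) ℝ) : Prop :=
  ∀ (lam : ℂ) (z : Fin n → ℂ), 0 ≤ lam.re →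
    mulVec (A.map Complex.ofReal - lam • 1) z = 0 →
    mulVec (C.map Complex.ofReal) z = 0 → z = 0

/-- A real square matrix is stable if all its (complex) eigenvalues have negative real part. -/
def IsStableMatrix {n : ℕ} (M : Matrix (Fin n) (Fin n) ℝ) : Prop :=
  ∀ μ ∈ spectrum ℂ (M.map Complex.ofReal), μ.re < 0

/-- Kernel condition: `(Q − LR⁻¹Lᵀ)z = 0` implies `Lᵀz = 0` and `A₀ⁱ z = 0` for all `i`. -/
def KernelCondition {n m r : ℕ} (Q : Matrix (Fin n) (Fin n) ℝ)
    (L : Matrix (Fin n) (Fin m) ℝ) (R : Matrix (Fin m) (Fin m) ℝ)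
    (A0 : Fin r → Matrix (Fin n) (Fin n) ℝ) : Prop :=
  ∀ z : Fin n → ℂ,
    mulVec ((Q - L * R⁻¹ * Lᵀ).map Complex.ofReal) z = 0 →
    mulVec (Lᵀ.map Complex.ofReal) z = 0 ∧
      ∀ i, mulVec ((A0 i).map Complex.ofReal) z = 0

/-- `Γ(X) = [[0, −A, −B], [−Aᵀ, Q_c(X), L_c(X)], [−Bᵀ, L_c(X)ᵀ, R_c(X)]]`. -/
def Gamma {n m r : ℕ} (A : Matrix (Fin n) (Fin n) ℝ) (B : Matrix (Fin n) (Fin m) ℝ)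
    (Q : Matrix (Fin n) (Fin n) ℝ) (L : Matrix (Fin n) (Fin m) ℝ)
    (R : Matrix (Fin m) (Fin m) ℝ)
    (A0 : Fin r → Matrix (Fin n) (Fin n) ℝ) (B0 : Fin r → Matrix (Fin n) (Fin m) ℝ)
    (X : Matrix (Fin n) (Fin n) ℝ) :
    Matrix ((Fin n ⊕ Fin n) ⊕ Fin m) ((Fin n ⊕ Fin n) ⊕ Fin m) ℝ :=
  fromBlocks (fromBlocks 0 (-A) (-Aᵀ) (Qc Q A0 X))
    (fromRows (-B) (Lc L A0 B0 X))
    (fromRows (-B) (Lc L A0 B0 X))ᵀ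
    (Rc R B0 X)

/-- `F_W(Y) = [Y; −Iₙ]ᵀ (Ω(Y) − Ω(W)) [Y; −Iₙ]`. -/
def FW {n m r : ℕ} (A : Matrix (Fin n) (Fin n) ℝ) (B : Matrix (Fin n) (Fin m) ℝ)
    (Q : Matrix (Fin n) (Fin n) ℝ) (L : Matrix (Fin n) (Fin m) ℝ)
    (R : Matrix (Fin m) (Fin m) ℝ)
    (A0 : Fin r → Matrix (Fin n) (Fin n) ℝ) (B0 : Fin r → Matrix (Fin n) (Fin m) ℝ)
    (W Y : Matrix (Fin n) (Fin n) ℝ) : Matrix (Fin n) (Fin n) ℝ :=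
  (stackNegI Y)ᵀ * (Omega A B Q L R A0 B0 Y - Omega A B Q L R A0 B0 W) * stackNegI Y

/-- `𝓕_W(Z) = Kᵀ Π(Z) K` with `K = [−Iₙ; R_c(W)⁻¹ (L_c(W) + W B)ᵀ]`. -/
def Fcal {n m r : ℕ} (B : Matrix (Fin n) (Fin m) ℝ)
    (L : Matrix (Fin n) (Fin m) ℝ) (R : Matrix (Fin m) (Fin m) ℝ)
    (A0 : Fin r → Matrix (Fin n) (Fin n) ℝ) (B0 : Fin r → Matrix (Fin n) (Fin m) ℝ)
    (W Z : Matrix (Fin n) (Fin n) ℝ) : Matrix (Fin n) (Fin n) ℝ :=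
  (fromRows (-1 : Matrix (Fin n) (Fin n) ℝ)
      ((Rc R B0 W)⁻¹ * (Lc L A0 B0 W + W * B)ᵀ))ᵀ *
    PiBlock A0 B0 Z *
    fromRows (-1 : Matrix (Fin n) (Fin n) ℝ)
      ((Rc R B0 W)⁻¹ * (Lc L A0 B0 W + W * B)ᵀ)
section Helpers

open scoped ComplexOrder

private lemma mapC_mul {a b c : Type*} [Fintype b] (M : Matrix a b ℝ) (N : Matrix b c ℝ) :
    (M * N).map Complex.ofReal = M.map Complex.ofReal * N.map Complex.ofReal :=
  Matrix.map_mul (f := Complex.ofRealHom)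

private lemma mapC_add {a b : Type*} (M N : Matrix a b ℝ) :
    (M + N).map Complex.ofReal = M.map Complex.ofReal + N.map Complex.ofReal := by
  ext i j; simp

private lemma mapC_sub {a b : Type*} (M N : Matrix a b ℝ) :
    (M - N).map Complex.ofReal = M.map Complex.ofReal - N.map Complex.ofReal := by
  ext i j; simp

private lemma mapC_sum {ι a b : Type*} (s : Finset ι) (f : ι → Matrix a b ℝ) :
    (∑ i ∈ s, f i).map Complex.ofReal = ∑ i ∈ s, (f i).map Complex.ofReal := by
  ext i j; simp [Matrix.sum_apply]

private lemma sum_mulVec' {ι a b : Type*} [Fintype b] (s : Finset ι)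
    (f : ι → Matrix a b ℂ) (z : b → ℂ) :
    (∑ i ∈ s, f i) *ᵥ z = ∑ i ∈ s, (f i *ᵥ z) := by
  ext j
  simp only [Matrix.mulVec, dotProduct, Matrix.sum_apply, Finset.sum_apply,
    Finset.sum_mul]
  exact Finset.sum_comm

private lemma psd_map {k : Type*} [Fintype k] [DecidableEq k] {M : Matrix k k ℝ}
    (h : M.PosSemidef) : (M.map Complex.ofReal).PosSemidef := by
  obtain ⟨B, rfl⟩ : ∃ B : Matrix k k ℝ, M = Bᴴ * B := by
    open scoped MatrixOrder in
    exact CStarAlgebra.nonneg_iff_eq_star_mul_self.mp h.nonneg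
  rw [mapC_mul]
  have hBc : (Bᴴ).map Complex.ofReal = (B.map Complex.ofReal)ᴴ := by
    ext i j; simp [Matrix.conjTranspose_apply, Complex.conj_ofReal]
  rw [hBc]
  exact Matrix.posSemidef_conjTranspose_mul_self _

private lemma psd_sum {ι k : Type*} [Fintype k] (s : Finset ι)
    (f : ι → Matrix k k ℝ) (h : ∀ i ∈ s, (f i).PosSemidef) :
    (∑ i ∈ s, f i).PosSemidef := by
  classical
  induction s using Finset.induction with
  | empty => simpa using (Matrix.PosSemidef.zero (n := k) (R := ℝ))
  | insert x s hx ih =>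
      rw [Finset.sum_insert hx]
      exact (h _ (Finset.mem_insert_self _ _)).add
        (ih fun i hi => h i (Finset.mem_insert_of_mem hi))

private lemma fromBlocks_sum {ι p q : Type*} (s : Finset ι)
    (f : ι → Matrix p p ℝ) (g : ι → Matrix p q ℝ) (h : ι → Matrix q p ℝ)
    (k : ι → Matrix q q ℝ) :
    ∑ i ∈ s, Matrix.fromBlocks (f i) (g i) (h i) (k i)
      = Matrix.fromBlocks (∑ i ∈ s, f i) (∑ i ∈ s, g i) (∑ i ∈ s, h i) (∑ i ∈ s, k i) := by
  ext (a | a) (b | b) <;> simp [Matrix.sum_apply]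

end Helpers

open scoped ComplexOrder

/-- If the sign conditions and kernel condition hold and (Q − LR⁻¹Lᵀ, A) is
detectable, then for every symmetric PSD X̃ the pair (H_c(X̃), A_c(X̃)) is
detectable and H_c(X̃) ⪰ 0. -/
theorem stmt1 (n m r : ℕ) (hn : 0 < n) (hm : 0 < m) (hr : 0 < r)
    (A Q : Matrix (Fin n) (Fin n) ℝ) (B L : Matrix (Fin n) (Fin m) ℝ)
    (R : Matrix (Fin m) (Fin m) ℝ)
    (A0 : Fin r → Matrix (Fin n) (Fin n) ℝ) (B0 : Fin r → Matrix (Fin n) (Fin m) ℝ)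
    (hQ : Q.IsHermitian) (hRsymm : R.IsHermitian)
    (hRpd : R.PosDef) (hsign : (fromBlocks Q L Lᵀ R).PosSemidef)
    (hker : KernelCondition Q L R A0)
    (hdet : Detectable (Q - L * R⁻¹ * Lᵀ) A) :
    ∀ Xt : Matrix (Fin n) (Fin n) ℝ, Xt.IsHermitian → Xt.PosSemidef →
      Detectable (Hc Q L R A0 B0 Xt) (Ac A B L R A0 B0 Xt) ∧
        (Hc Q L R A0 B0 Xt).PosSemidef := by
  intro Xt hXtH hXt
  have hXtT : Xtᵀ = Xt := by
    rw [← Matrix.conjTranspose_eq_transpose_of_trivial]; exact hXtH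
  -- basic positivity facts
  have hPi22 : (Pi22 B0 Xt).PosSemidef := by
    refine psd_sum _ _ fun i _ => ?_
    simpa [Matrix.conjTranspose_eq_transpose_of_trivial] using
      hXt.conjTranspose_mul_mul_same (B0 i)
  have hRc : (Rc R B0 Xt).PosDef := hRpd.add_posSemidef hPi22
  have hRcdet : IsUnit (Rc R B0 Xt).det := hRc.det_pos.ne'.isUnit
  have hRdet : IsUnit R.det := hRpd.det_pos.ne'.isUnit
  haveI : Invertible (Rc R B0 Xt) := (Rc R B0 Xt).invertibleOfIsUnitDet hRcdet
  have hPi12T : (Pi12 A0 B0 Xt)ᵀ = ∑ i, (B0 i)ᵀ * Xt * A0 i := by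
    rw [Pi12, Matrix.transpose_sum]
    refine Finset.sum_congr rfl fun i _ => ?_
    simp [Matrix.transpose_mul, hXtT, Matrix.mul_assoc]
  have hPiPSD : (PiBlock A0 B0 Xt).PosSemidef := by
    have hsum : PiBlock A0 B0 Xt = ∑ i : Fin r,
        Matrix.fromBlocks ((A0 i)ᵀ * Xt * A0 i) ((A0 i)ᵀ * Xt * B0 i)
          ((B0 i)ᵀ * Xt * A0 i) ((B0 i)ᵀ * Xt * B0 i) := by
      rw [fromBlocks_sum, PiBlock, hPi12T, Pi11, Pi12, Pi22]
    rw [hsum]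
    refine psd_sum _ _ fun i _ => ?_
    have h2 := hXt.conjTranspose_mul_mul_same (Matrix.fromCols (A0 i) (B0 i))
    rwa [Matrix.conjTranspose_eq_transpose_of_trivial, Matrix.transpose_fromCols,
      Matrix.fromRows_mul, Matrix.fromRows_mul_fromCols] at h2
  have hMeq : Matrix.fromBlocks (Qc Q A0 Xt) (Lc L A0 B0 Xt) (Lc L A0 B0 Xt)ᵀ (Rc R B0 Xt)
      = Matrix.fromBlocks Q L Lᵀ R + PiBlock A0 B0 Xt := by
    rw [PiBlock, Matrix.fromBlocks_add]
    simp only [Qc, Lc, Rc, Matrix.transpose_add]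
  have hMpsd : (Matrix.fromBlocks (Qc Q A0 Xt) (Lc L A0 B0 Xt) (Lc L A0 B0 Xt)ᵀ
      (Rc R B0 Xt)).PosSemidef := by
    rw [hMeq]; exact hsign.add hPiPSD
  -- H_c is PSD via Schur complement
  have hHcPSD : (Hc Q L R A0 B0 Xt).PosSemidef := by
    have hM' := hMpsd
    rw [← Matrix.conjTranspose_eq_transpose_of_trivial (Lc L A0 B0 Xt)] at hM'
    have := (Matrix.PosDef.fromBlocks₂₂ (Qc Q A0 Xt) (Lc L A0 B0 Xt) hRc).mp hM'
    rwa [Matrix.conjTranspose_eq_transpose_of_trivial, ← Hc] at this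
  refine ⟨?_, hHcPSD⟩
  -- detectability
  intro lam z hlam hAcz hHcz
  set RcX := Rc R B0 Xt with hRcX
  set LcX := Lc L A0 B0 Xt with hLcX
  set u : Fin m → ℂ := -(((RcX⁻¹ * LcXᵀ).map Complex.ofReal) *ᵥ z) with hu
  have hRcinv : RcX * (RcX⁻¹ * LcXᵀ) = LcXᵀ := by
    rw [← Matrix.mul_assoc, Matrix.mul_nonsing_inv _ hRcdet, Matrix.one_mul]
  have hTop : (Qc Q A0 Xt).map Complex.ofReal *ᵥ z + LcX.map Complex.ofReal *ᵥ u = 0 := by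
    rw [hu, Matrix.mulVec_neg, Matrix.mulVec_mulVec, ← mapC_mul, ← Matrix.mul_assoc,
      ← sub_eq_add_neg, ← Matrix.sub_mulVec, ← mapC_sub]
    simpa [Hc, hLcX, hRcX, Matrix.mul_assoc] using hHcz
  have hBot : LcXᵀ.map Complex.ofReal *ᵥ z + RcX.map Complex.ofReal *ᵥ u = 0 := by
    rw [hu, Matrix.mulVec_neg, Matrix.mulVec_mulVec, ← mapC_mul, hRcinv,
      ← sub_eq_add_neg, sub_self]
  have hMw : ((Matrix.fromBlocks Q L Lᵀ R).map Complex.ofReal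
        + (PiBlock A0 B0 Xt).map Complex.ofReal) *ᵥ Sum.elim z u = 0 := by
    rw [← mapC_add, ← hMeq, Matrix.fromBlocks_map, Matrix.fromBlocks_mulVec]
    simp only [Sum.elim_comp_inl, Sum.elim_comp_inr]
    rw [hTop, hBot]
    ext (a | a) <;> simp
  have hS0 : star (Sum.elim z u) ⬝ᵥ
      ((Matrix.fromBlocks Q L Lᵀ R).map Complex.ofReal *ᵥ Sum.elim z u) = 0 := by
    have hsplit : star (Sum.elim z u) ⬝ᵥ
          ((Matrix.fromBlocks Q L Lᵀ R).map Complex.ofReal *ᵥ Sum.elim z u)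
        + star (Sum.elim z u) ⬝ᵥ
          ((PiBlock A0 B0 Xt).map Complex.ofReal *ᵥ Sum.elim z u) = 0 := by
      rw [← dotProduct_add, ← Matrix.add_mulVec, hMw, dotProduct_zero]
    exact ((add_eq_zero_iff_of_nonneg ((psd_map hsign).dotProduct_mulVec_nonneg _) ((psd_map hPiPSD).dotProduct_mulVec_nonneg _)).mp
      hsplit).1
  have hSw : (Matrix.fromBlocks Q L Lᵀ R).map Complex.ofReal *ᵥ Sum.elim z u = 0 :=
    ((psd_map hsign).dotProduct_mulVec_zero_iff _).mp hS0
  rw [Matrix.fromBlocks_map, Matrix.fromBlocks_mulVec] at hSw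
  have hS1 : Q.map Complex.ofReal *ᵥ z + L.map Complex.ofReal *ᵥ u = 0 :=
    funext fun a => congrFun hSw (Sum.inl a)
  have hS2 : Lᵀ.map Complex.ofReal *ᵥ z + R.map Complex.ofReal *ᵥ u = 0 :=
    funext fun a => congrFun hSw (Sum.inr a)
  have huval : u = -((R⁻¹ * Lᵀ).map Complex.ofReal *ᵥ z) := by
    have h := congrArg (fun v => (R⁻¹).map Complex.ofReal *ᵥ v) hS2
    simp only [Matrix.mulVec_add, Matrix.mulVec_mulVec, ← mapC_mul, Matrix.mulVec_zero] at h
    rw [Matrix.nonsing_inv_mul _ hRdet] at h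
    rw [Matrix.map_one _ Complex.ofReal_zero Complex.ofReal_one, Matrix.one_mulVec] at h
    rw [add_comm] at h
    exact eq_neg_of_add_eq_zero_left h
  have hQz : (Q - L * R⁻¹ * Lᵀ).map Complex.ofReal *ᵥ z = 0 := by
    rw [mapC_sub, Matrix.sub_mulVec, Matrix.mul_assoc, mapC_mul, ← Matrix.mulVec_mulVec,
      ← neg_neg ((R⁻¹ * Lᵀ).map Complex.ofReal *ᵥ z), ← huval, Matrix.mulVec_neg,
      sub_neg_eq_add]
    exact hS1
  obtain ⟨hLz, hA0z⟩ := hker z hQz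
  have hPi12z : ((Pi12 A0 B0 Xt)ᵀ).map Complex.ofReal *ᵥ z = 0 := by
    rw [hPi12T, mapC_sum, sum_mulVec']
    refine Finset.sum_eq_zero fun i _ => ?_
    rw [mapC_mul, ← Matrix.mulVec_mulVec, hA0z i, Matrix.mulVec_zero]
  have hLcz : LcXᵀ.map Complex.ofReal *ᵥ z = 0 := by
    rw [hLcX, Lc, Matrix.transpose_add, mapC_add, Matrix.add_mulVec, hLz, hPi12z,
      add_zero]
  have hBRLz : (B * RcX⁻¹ * LcXᵀ).map Complex.ofReal *ᵥ z = 0 := by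
    rw [mapC_mul, ← Matrix.mulVec_mulVec, hLcz, Matrix.mulVec_zero]
  have hAz : (A.map Complex.ofReal - lam • 1) *ᵥ z = 0 := by
    have h := hAcz
    simp only [Ac, ← hRcX, ← hLcX, mapC_sub] at h
    rw [Matrix.sub_mulVec, Matrix.sub_mulVec, hBRLz, sub_zero] at h
    rw [Matrix.sub_mulVec]
    exact h
  exact hdet lam z hlam hAz hQz
end
end

section
/- Assume R ≻ 0. Let X, Y ∈ ℝ^{n×n} be symmetric with 0 ⪯ X ⪯ Y, and suppose [X, −Iₙ] Ω(Y) [X; −Iₙ] = 0 (i.e., X solves the CARE whose coefficients are frozen at Y). Then 𝓡(X) ⪯ 0. -/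
open Matrix Filter

noncomputable section

section Aux

lemma myCT {a b : Type*} (M : Matrix a b ℝ) : Mᴴ = Mᵀ := by
  ext i j; simp [Matrix.conjTranspose_apply]

lemma myPosSemidefSum {n N : ℕ} (f : Fin N → Matrix (Fin n) (Fin n) ℝ)
    (h : ∀ i, (f i).PosSemidef) : (∑ i, f i).PosSemidef := by
  classical
  exact Finset.sum_induction f _ (fun a b ha hb => ha.add hb) Matrix.PosSemidef.zero
    (fun i _ => h i)

lemma mySchurDiff {n m : ℕ} (S T : Matrix (Fin n) (Fin m) ℝ) (RX RY : Matrix (Fin m) (Fin m) ℝ)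
    (hXd : IsUnit RX.det) (hYd : IsUnit RY.det) (hRX : RXᵀ = RX) (hRY : RYᵀ = RY) :
    (T - S) * (-(T * RY⁻¹))ᵀ + (-(T * RY⁻¹)) * (T - S)ᵀ
      + (-(T * RY⁻¹)) * (RY - RX) * (-(T * RY⁻¹))ᵀ
      + (-(T * RY⁻¹) + S * RX⁻¹) * RX * (-(T * RY⁻¹) + S * RX⁻¹)ᵀ
      = -(T * RY⁻¹ * Tᵀ) + S * RX⁻¹ * Sᵀ := by
  simp only [transpose_add, transpose_neg, transpose_mul, transpose_sub, transpose_nonsing_inv,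
    hRX, hRY]
  simp only [Matrix.neg_mul, Matrix.mul_neg, Matrix.sub_mul, Matrix.mul_sub, Matrix.add_mul,
    Matrix.mul_add, neg_neg, neg_sub]
  simp only [Matrix.mul_assoc]
  simp only [Matrix.nonsing_inv_mul_cancel_left _ _ hXd, Matrix.mul_nonsing_inv_cancel_left _ _ hXd,
    Matrix.nonsing_inv_mul_cancel_left _ _ hYd, Matrix.mul_nonsing_inv_cancel_left _ _ hYd]
  abel

end Aux

set_option maxHeartbeats 1600000 in
set_option maxRecDepth 16000 in
/-- If R ≻ 0, 0 ⪯ X ⪯ Y and X solves the CARE frozen at Y, then 𝓡(X) ⪯ 0. -/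
theorem stmt10 (n m r : ℕ) (hn : 0 < n) (hm : 0 < m) (hr : 0 < r)
    (A Q : Matrix (Fin n) (Fin n) ℝ) (B L : Matrix (Fin n) (Fin m) ℝ)
    (R : Matrix (Fin m) (Fin m) ℝ)
    (A0 : Fin r → Matrix (Fin n) (Fin n) ℝ) (B0 : Fin r → Matrix (Fin n) (Fin m) ℝ)
    (hQ : Q.IsHermitian) (hRsymm : R.IsHermitian)
    (hRpd : R.PosDef)
    (X Y : Matrix (Fin n) (Fin n) ℝ)
    (hX : X.IsHermitian) (hY : Y.IsHermitian)
    (hXpsd : X.PosSemidef) (hXY : (Y - X).PosSemidef)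
    (hfroz : (stackNegI X)ᵀ * Omega A B Q L R A0 B0 Y * stackNegI X = 0) :
    (-(scareRes A B Q L R A0 B0 X)).PosSemidef := by
  classical
  set RX := Rc R B0 X with hRXdef
  set RY := Rc R B0 Y with hRYdef
  set TX := X * B + Lc L A0 B0 X with hTXdef
  set TY := X * B + Lc L A0 B0 Y with hTYdef
  set Z : Matrix (Fin n) (Fin m) ℝ := -(TY * RY⁻¹) with hZdef
  set E : Matrix (Fin n) (Fin m) ℝ := Z + TX * RX⁻¹ with hEdef
  have hXt : Xᵀ = X := by rw [← myCT]; exact hX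
  have hYt : Yᵀ = Y := by rw [← myCT]; exact hY
  have hDt : (Y - X)ᵀ = Y - X := by rw [transpose_sub, hXt, hYt]
  have hYpsd : Y.PosSemidef := by simpa using hXpsd.add hXY
  have hPi22X : (Pi22 B0 X).PosSemidef := myPosSemidefSum _ fun i => by
    simpa [myCT] using hXpsd.conjTranspose_mul_mul_same (B0 i)
  have hPi22Y : (Pi22 B0 Y).PosSemidef := myPosSemidefSum _ fun i => by
    simpa [myCT] using hYpsd.conjTranspose_mul_mul_same (B0 i)
  have hRXpd : RX.PosDef := hRpd.add_posSemidef hPi22X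
  have hRYpd : RY.PosDef := hRpd.add_posSemidef hPi22Y
  have hXd : IsUnit RX.det := hRXpd.det_pos.ne'.isUnit
  have hYd : IsUnit RY.det := hRYpd.det_pos.ne'.isUnit
  have hRXt : RXᵀ = RX := by rw [← myCT]; exact hRXpd.isHermitian
  have hRYt : RYᵀ = RY := by rw [← myCT]; exact hRYpd.isHermitian
  -- the frozen CARE in explicit form
  have hres : Aᵀ * X + X * A + Qc Q A0 Y - TY * RY⁻¹ * TYᵀ = 0 := by
    have h0 := hfroz
    rw [stackNegI, Omega, transpose_fromRows, Matrix.mul_assoc, fromBlocks_mul_fromRows,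
      fromCols_mul_fromRows] at h0
    rw [← h0]
    simp only [transpose_neg, transpose_one, hXt]
    simp only [Gc, Ac, Hc, Hc, hTYdef, hRYdef]
    simp only [transpose_add, transpose_sub, transpose_mul, transpose_transpose,
      transpose_nonsing_inv, hRYt, hXt]
    simp only [Matrix.neg_mul, Matrix.mul_neg, Matrix.sub_mul, Matrix.mul_sub, Matrix.add_mul,
      Matrix.mul_add, Matrix.one_mul, Matrix.mul_one, neg_neg]
    simp only [Matrix.mul_assoc, ← hRYdef, hRYt]
    abel
  -- linearity of the Π maps
  have hQcd : Qc Q A0 Y - Qc Q A0 X = Pi11 A0 (Y - X) := by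
    simp [Qc, Pi11, Matrix.mul_sub, Matrix.sub_mul, Finset.sum_sub_distrib]
  have hTd : TY - TX = Pi12 A0 B0 (Y - X) := by
    simp [hTXdef, hTYdef, Lc, Pi12, Matrix.mul_sub, Matrix.sub_mul, Finset.sum_sub_distrib]
  have hRd : RY - RX = Pi22 B0 (Y - X) := by
    simp [hRXdef, hRYdef, Rc, Pi22, Matrix.mul_sub, Matrix.sub_mul, Finset.sum_sub_distrib]
  have hscare : scareRes A B Q L R A0 B0 X
      = Aᵀ * X + X * A + Qc Q A0 X - TX * RX⁻¹ * TXᵀ := by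
    unfold scareRes
    rw [hTXdef, hRXdef]
  -- expansion of the quadratic sum
  have hsum : (∑ i, (A0 i + B0 i * Zᵀ)ᵀ * (Y - X) * (A0 i + B0 i * Zᵀ))
      = Pi11 A0 (Y - X) + (Pi12 A0 B0 (Y - X) * Zᵀ + Z * (Pi12 A0 B0 (Y - X))ᵀ
        + Z * Pi22 B0 (Y - X) * Zᵀ) := by
    have e1 : ∀ i : Fin r, (A0 i + B0 i * Zᵀ)ᵀ * (Y - X) * (A0 i + B0 i * Zᵀ)
        = (A0 i)ᵀ * (Y - X) * A0 i + ((A0 i)ᵀ * (Y - X) * B0 i) * Zᵀ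
          + Z * ((A0 i)ᵀ * (Y - X) * B0 i)ᵀ + Z * ((B0 i)ᵀ * (Y - X) * B0 i) * Zᵀ := by
      intro i
      simp only [transpose_add, transpose_mul, transpose_transpose, hDt, Matrix.add_mul,
        Matrix.mul_add, Matrix.mul_assoc]
      abel
    simp only [e1, Finset.sum_add_distrib]
    simp only [← Matrix.sum_mul, ← Matrix.mul_sum, ← Matrix.transpose_sum]
    simp only [Pi11, Pi12, Pi22]
    abel
  -- the key identity
  have key : -(scareRes A B Q L R A0 B0 X)
      = (∑ i, (A0 i + B0 i * Zᵀ)ᵀ * (Y - X) * (A0 i + B0 i * Zᵀ)) + E * RX * Eᵀ := by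
    rw [hsum, hscare, ← hQcd, ← hTd, ← hRd, hZdef, hEdef, hZdef]
    rw [← sub_eq_zero]
    calc -(Aᵀ * X + X * A + Qc Q A0 X - TX * RX⁻¹ * TXᵀ)
          - ((Qc Q A0 Y - Qc Q A0 X) + ((TY - TX) * (-(TY * RY⁻¹))ᵀ
            + (-(TY * RY⁻¹)) * (TY - TX)ᵀ + (-(TY * RY⁻¹)) * (RY - RX) * (-(TY * RY⁻¹))ᵀ)
            + (-(TY * RY⁻¹) + TX * RX⁻¹) * RX * (-(TY * RY⁻¹) + TX * RX⁻¹)ᵀ)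
        = -(Aᵀ * X + X * A + Qc Q A0 X - TX * RX⁻¹ * TXᵀ)
          - ((Qc Q A0 Y - Qc Q A0 X) + ((TY - TX) * (-(TY * RY⁻¹))ᵀ
            + (-(TY * RY⁻¹)) * (TY - TX)ᵀ + (-(TY * RY⁻¹)) * (RY - RX) * (-(TY * RY⁻¹))ᵀ
            + (-(TY * RY⁻¹) + TX * RX⁻¹) * RX * (-(TY * RY⁻¹) + TX * RX⁻¹)ᵀ)) := by abel
      _ = -(Aᵀ * X + X * A + Qc Q A0 X - TX * RX⁻¹ * TXᵀ)
          - ((Qc Q A0 Y - Qc Q A0 X) + (-(TY * RY⁻¹ * TYᵀ) + TX * RX⁻¹ * TXᵀ)) := by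
          rw [mySchurDiff TX TY RX RY hXd hYd hRXt hRYt]
      _ = -(Aᵀ * X + X * A + Qc Q A0 Y - TY * RY⁻¹ * TYᵀ) := by abel
      _ = 0 := by rw [hres, neg_zero]
  rw [key]
  refine Matrix.PosSemidef.add (myPosSemidefSum _ fun i => ?_)
    (by simpa [myCT] using hRXpd.posSemidef.mul_mul_conjTranspose_same E)
  simpa [myCT] using hXY.conjTranspose_mul_mul_same (A0 i + B0 i * Zᵀ)
end
end
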